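/- Let 1 ≤ k ≤ n−1, let J be a frozen k-element subset of {1,…,n}, and let s ∈ K_{k,n}. Then η_J(s) = 0, i.e. Σ_I s_I ρ_J(e_I) = 0, where the sum is over all k-element subsets I of {1,…,n}. (The planar basis elements indexed by frozen vertices vanish identically on the kinematic space.) -/

import Mathlib

open Finset

/-- Cyclic successor in `Fin n` (so the index after `n` is `1`). -/
def csucc {n : ℕ} (x : Fin n) : Fin n :=
  ⟨(x.val + 1) % n, Nat.mod_lt _ (Nat.lt_of_le_of_lt (Nat.zero_le _) x.isLt)⟩

/-- The linear functional `L_j(x) = Σ_{r=1}^{n−1} r·x_{j+r}` (subscripts mod `n`). -/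
def Lfun {n : ℕ} (j : Fin n) (x : Fin n → ℝ) : ℝ :=
  ∑ r : Fin n, (r.val : ℝ) * x (j + r)

/-- `h(x) = min_{1 ≤ j ≤ n} L_j(x)`. -/
noncomputable def hfun {n : ℕ} (x : Fin n → ℝ) : ℝ :=
  sInf (Set.range fun j : Fin n => Lfun j x)

/-- `e_S = Σ_{j ∈ S} e_j`, the indicator vector of a subset `S ⊆ {1,…,n}`. -/
def ind {n : ℕ} (S : Finset (Fin n)) : Fin n → ℝ := fun i => if i ∈ S then 1 else 0

/-- `ρ_J(x) = h(x − e_J)`. -/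
noncomputable def rho {n : ℕ} (J : Finset (Fin n)) (x : Fin n → ℝ) : ℝ :=
  hfun (x - ind J)


lemma subval {n : ℕ} [NeZero n] (a b : Fin n) :
    (a - b).val = if a.val < b.val then a.val + n - b.val else a.val - b.val := by
  have hb := b.isLt
  have ha := a.isLt
  rw [Fin.sub_def]
  simp only
  split
  · have : n - b.val + a.val < n := by omega
    rw [Nat.mod_eq_of_lt this]; omega
  · have : n - b.val + a.val = (a.val - b.val) + n := by omega
    rw [this, Nat.add_mod_right, Nat.mod_eq_of_lt (by omega)]

lemma LfunInd {n : ℕ} [NeZero n] (j : Fin n) (S : Finset (Fin n)) :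
    Lfun j (ind S) = ∑ a ∈ S, ((a - j).val : ℝ) := by
  unfold Lfun ind
  rw [Fintype.sum_equiv (Equiv.addLeft j)
    (fun r => (r.val : ℝ) * (if j + r ∈ S then 1 else 0))
    (fun a => ((a - j).val : ℝ) * (if a ∈ S then 1 else 0))
    (fun r => by simp [Equiv.addLeft])]
  simp only [mul_ite, mul_one, mul_zero]
  rw [Finset.sum_ite_mem, univ_inter]

lemma LfunSub {n : ℕ} (j : Fin n) (x y : Fin n → ℝ) :
    Lfun j (x - y) = Lfun j x - Lfun j y := by
  unfold Lfun
  simp [mul_sub, Finset.sum_sub_distrib]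

lemma valInjOn {n : ℕ} [NeZero n] (j0 : Fin n) (S : Finset (Fin n)) :
    Set.InjOn (fun a : Fin n => (a - j0).val) S := by
  intro a _ b _ h
  have : a - j0 = b - j0 := Fin.val_injective h
  exact sub_left_injective this

lemma key_le {n k : ℕ} [NeZero n] (hkn : k < n) (i : Fin n)
    (I : Finset (Fin n)) (hI : I.card = k) (j : Fin n)
    (hJc : (univ.filter fun x : Fin n => (x - i).val < k).card = k) :
    Lfun (i + (⟨k, hkn⟩ : Fin n)) (ind I - ind (univ.filter fun x => (x - i).val < k))
      ≤ Lfun j (ind I - ind (univ.filter fun x => (x - i).val < k)) := by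
  set J : Finset (Fin n) := univ.filter fun x => (x - i).val < k with hJ
  change J.card = k at hJc
  set j0 : Fin n := i + (⟨k, hkn⟩ : Fin n) with hj0
  set d : ℕ := (j - j0).val with hd
  have hdn : d < n := (j - j0).isLt
  have hjj : j = j0 + (j - j0) := by rw [add_sub_cancel]
  -- pointwise difference
  have diff : ∀ a : Fin n, ((a - j0).val : ℝ) - ((a - j).val : ℝ)
      = (d : ℝ) - (if (a - j0).val < d then (n : ℝ) else 0) := by
    intro a
    have haj : a - j = (a - j0) - (j - j0) := by
      conv_lhs => rw [hjj]
      rw [sub_add_eq_sub_sub]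
    have hx := (a - j0).isLt
    rw [haj, subval (a - j0) (j - j0)]
    split
    · rename_i h
      rw [Nat.cast_sub (by omega)]
      push_cast; ring
    · rename_i h
      rw [Nat.cast_sub (by omega)]
      ring
  have sumdiff : ∀ S : Finset (Fin n),
      (∑ a ∈ S, ((a - j0).val : ℝ)) - ∑ a ∈ S, ((a - j).val : ℝ)
      = (S.card : ℝ) * d - n * (S.filter fun a => (a - j0).val < d).card := by
    intro S
    rw [← Finset.sum_sub_distrib, Finset.sum_congr rfl (fun a _ => diff a),
      Finset.sum_sub_distrib, Finset.sum_const, ← Finset.sum_filter,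
      Finset.sum_const]
    simp [mul_comm]
  -- cardinality bounds
  have hcJ : (J.filter fun a => (a - j0).val < d).card ≤ d - (n - k) := by
    have : (J.filter fun a => (a - j0).val < d).card ≤ (Finset.Ico (n - k) d).card := by
      apply Finset.card_le_card_of_injOn (fun a => (a - j0).val)
      · intro a ha
        simp only [mem_coe, mem_filter, hJ, mem_univ, true_and] at ha
        obtain ⟨h1, h2⟩ := ha
        have haj0 : a - j0 = (a - i) - (⟨k, hkn⟩ : Fin n) := by
          rw [hj0, sub_add_eq_sub_sub]
        have : (a - j0).val = (a - i).val + n - k := by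
          rw [haj0, subval]
          rw [if_pos h1]
        simp only [mem_coe, mem_Ico]
        omega
      · exact valInjOn j0 _
    rwa [Nat.card_Ico] at this
  have hcI : k ≤ (I.filter fun a => (a - j0).val < d).card + (n - d) := by
    have h1 : (I.filter fun a => ¬ (a - j0).val < d).card ≤ (Finset.Ico d n).card := by
      apply Finset.card_le_card_of_injOn (fun a => (a - j0).val)
      · intro a ha
        simp only [mem_coe, mem_filter] at ha
        have := (a - j0).isLt
        simp only [mem_coe, mem_Ico]
        omega
      · exact valInjOn j0 _
    rw [Nat.card_Ico] at h1
    have h2 := Finset.card_filter_add_card_filter_not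
      (s := I) (p := fun a => (a - j0).val < d)
    omega
  have hJcard : J.card ≤ n := Finset.card_le_card (Finset.subset_univ J) |>.trans
    (by simp)
  have hcard : (J.filter fun a => (a - j0).val < d).card
      ≤ (I.filter fun a => (a - j0).val < d).card := by omega
  rw [LfunSub, LfunSub, LfunInd, LfunInd, LfunInd, LfunInd]
  have e1 := sumdiff I
  have e2 := sumdiff J
  have hJk : (J.card : ℝ) = (J.card : ℝ) := rfl
  have : (n : ℝ) * (J.filter fun a => (a - j0).val < d).card
      ≤ (n : ℝ) * (I.filter fun a => (a - j0).val < d).card := by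
    apply mul_le_mul_of_nonneg_left _ (by positivity)
    exact_mod_cast hcard
  -- goal: ΣI w0 - ΣJ w0 ≤ ΣI w - ΣJ w
  have hJIr : (J.card : ℝ) * d = (I.card : ℝ) * d := by rw [hJc, hI]
  linarith [e1, e2, this]

lemma hfun_eq_of_min {n : ℕ} (x : Fin n → ℝ) (j0 : Fin n)
    (h : ∀ j, Lfun j0 x ≤ Lfun j x) : hfun x = Lfun j0 x := by
  haveI : Nonempty (Fin n) := ⟨j0⟩
  unfold hfun
  apply le_antisymm
  · exact csInf_le (Set.Finite.bddBelow (Set.finite_range _)) ⟨j0, rfl⟩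
  · exact le_csInf (Set.range_nonempty _) (by rintro b ⟨j, rfl⟩; exact h j)

/-- if `J` is a frozen `k`-subset and `s` lies in the kinematic
space `K_{k,n}` (i.e. `Σ_{J ∋ a} s_J = 0` for all `a`), then
`η_J(s) = 0`, i.e. `Σ_I s_I ρ_J(e_I) = 0` (sum over all `k`-subsets `I`). -/
theorem stmt6 {n k : ℕ} (hk1 : 1 ≤ k) (hk2 : k ≤ n - 1)
    (J : Finset (Fin n)) (hJcard : J.card = k)
    (hJfrozen : ∃ i : Fin n, J = univ.filter fun x => (x - i).val < k)
    (s : Finset (Fin n) → ℝ)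
    (hs : ∀ a : Fin n,
      ∑ I ∈ (powersetCard k (univ : Finset (Fin n))).filter (fun I => a ∈ I), s I = 0) :
    ∑ I ∈ powersetCard k (univ : Finset (Fin n)), s I * rho J (ind I) = 0 := by
  have hn : 2 ≤ n := by omega
  haveI : NeZero n := ⟨by omega⟩
  have hkn : k < n := by omega
  obtain ⟨i, hJ⟩ := hJfrozen
  set P := powersetCard k (univ : Finset (Fin n)) with hP
  set j0 : Fin n := i + (⟨k, hkn⟩ : Fin n) with hj0
  set w : Fin n → ℝ := fun a => ((a - j0).val : ℝ) with hw
  set C : ℝ := ∑ a ∈ J, w a with hC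
  have hJc : (univ.filter fun x : Fin n => (x - i).val < k).card = k := by
    rw [← hJ]; exact hJcard
  have hrho : ∀ I ∈ P, rho J (ind I) = (∑ a ∈ I, w a) - C := by
    intro I hI
    have hIc : I.card = k := mem_powersetCard_univ.mp hI
    unfold rho
    rw [hJ]
    rw [hfun_eq_of_min _ j0 (fun j => key_le hkn i I hIc j hJc), LfunSub,
      LfunInd, LfunInd, hC, hJ]
  have key2 : ∑ I ∈ P, s I = 0 := by
    have h0 : (k : ℝ) * ∑ I ∈ P, s I = 0 := by
      calc (k : ℝ) * ∑ I ∈ P, s I = ∑ I ∈ P, (I.card : ℝ) * s I := by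
            rw [Finset.mul_sum]
            exact sum_congr rfl fun I hI => by rw [mem_powersetCard_univ.mp hI]
        _ = ∑ I ∈ P, ∑ a : Fin n, (if a ∈ I then s I else 0) := by
            refine sum_congr rfl fun I _ => ?_
            rw [Finset.sum_ite_mem, univ_inter, Finset.sum_const, nsmul_eq_mul]
        _ = ∑ a : Fin n, ∑ I ∈ P, (if a ∈ I then s I else 0) := Finset.sum_comm
        _ = ∑ a : Fin n, ∑ I ∈ P.filter (fun I => a ∈ I), s I := by
            exact sum_congr rfl fun a _ => (Finset.sum_filter _ _).symm
        _ = 0 := by simp [hs]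
    have hk : (k : ℝ) ≠ 0 := Nat.cast_ne_zero.mpr (by omega)
    exact (mul_eq_zero.mp h0).resolve_left hk
  have key1 : ∑ I ∈ P, s I * ∑ a ∈ I, w a = 0 := by
    have step : ∀ I ∈ P, s I * ∑ a ∈ I, w a = ∑ a : Fin n, if a ∈ I then s I * w a else 0 := by
      intro I _
      rw [Finset.mul_sum]
      rw [Finset.sum_ite_mem, univ_inter]
    rw [Finset.sum_congr rfl step, Finset.sum_comm]
    refine Finset.sum_eq_zero fun a _ => ?_
    rw [← Finset.sum_filter, ← Finset.sum_mul, hs a, zero_mul]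
  calc ∑ I ∈ P, s I * rho J (ind I) = ∑ I ∈ P, (s I * ∑ a ∈ I, w a - s I * C) := by
        refine sum_congr rfl fun I hI => ?_
        rw [hrho I hI, mul_sub]
    _ = (∑ I ∈ P, s I * ∑ a ∈ I, w a) - (∑ I ∈ P, s I) * C := by
        rw [Finset.sum_sub_distrib, Finset.sum_mul]
    _ = 0 := by rw [key1, key2, zero_mul, sub_zero]
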